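/- For any finite coloring of the natural numbers, there exists an infinite set H of natural numbers such that all finite nonempty sums of distinct elements of H have the same color (Hindman's theorem). -/

import Mathlib

open Hindman

/-- Elements of an FS-set of a positive stream are positive. -/
lemma FS_pos {a : Stream' ℕ} (ha : ∀ n, 0 < a.get n) {m : ℕ} (hm : m ∈ FS a) : 0 < m := by
  induction hm with
  | head' a => exact ha 0
  | tail' a m h ih => exact ih fun n => ha (n + 1)
  | cons' a m h ih => exact Nat.lt_of_lt_of_le (ih fun n => ha (n + 1)) (Nat.le_add_left _ _)

/-- One step of the condensation construction. -/
lemma step_exists (y : ℕ) (u : Stream' ℕ) (hu : ∀ n, 0 < u.get n) :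
    ∃ p : ℕ × Stream' ℕ, (∀ n, 0 < p.2.get n) ∧ y < p.1 ∧ p.1 ∈ FS u ∧
      ∀ m' ∈ FS p.2, m' ∈ FS u ∧ p.1 + m' ∈ FS u := by
  set y' := ∑ i ∈ Finset.range (y + 1), u.get i with hy'
  have hy'mem : y' ∈ FS u := FS.finset_sum u _ (by simp)
  have hy'big : y < y' := by
    have : ∀ i ∈ Finset.range (y + 1), 1 ≤ u.get i := fun i _ => hu i
    calc y < y + 1 := Nat.lt_succ_self y
    _ = ∑ _i ∈ Finset.range (y + 1), 1 := by simp
    _ ≤ y' := Finset.sum_le_sum this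
  obtain ⟨n, hn⟩ := FS.add hy'mem
  refine ⟨(y', u.drop n), fun m => hu (m + n), hy'big, hy'mem, fun m' hm' => ⟨?_, hn m' hm'⟩⟩
  · exact FS_iter_tail_sub_FS u n hm'

theorem stmt_8 (k : ℕ) (c : ℕ → Fin k) :
    ∃ (H : Set ℕ) (i : Fin k), H.Infinite ∧
      ∀ s : Finset ℕ, s.Nonempty → ↑s ⊆ H → c (∑ n ∈ s, n) = i := by
  -- apply Hindman's theorem to the stream of positive naturals
  have apos : ∀ n, 0 < (Stream'.get (fun n => n + 1) n) := fun n => Nat.succ_pos n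
  obtain ⟨t, ht, b, hb⟩ := FS_partition_regular (fun n => n + 1)
      ((fun i => {m | 0 < m ∧ c m = i}) '' Set.univ)
      (Set.Finite.image _ Set.finite_univ)
      (fun m hm => by
        refine Set.mem_sUnion.2 ⟨{n | 0 < n ∧ c n = c m}, ⟨c m, Set.mem_univ _, rfl⟩, ?_, rfl⟩
        exact FS_pos apos hm)
  obtain ⟨i, -, rfl⟩ := ht
  have hbpos : ∀ n, 0 < b.get n := fun n => (hb (FS.singleton b n)).1
  -- the condensation sequence
  let step : {p : ℕ × Stream' ℕ // ∀ n, 0 < p.2.get n} → {p : ℕ × Stream' ℕ // ∀ n, 0 < p.2.get n} :=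
    fun p => ⟨(step_exists p.1.1 p.1.2 p.2).choose, (step_exists p.1.1 p.1.2 p.2).choose_spec.1⟩
  let g : ℕ → {p : ℕ × Stream' ℕ // ∀ n, 0 < p.2.get n} := fun j =>
    step^[j] ⟨(0, b), hbpos⟩
  have hgsucc : ∀ j, g (j + 1) = step (g j) := fun j => Function.iterate_succ_apply' step j _
  have hspec : ∀ j, (g j).1.1 < (g (j + 1)).1.1 ∧ (g (j + 1)).1.1 ∈ FS (g j).1.2 ∧
      ∀ m' ∈ FS (g (j + 1)).1.2, m' ∈ FS (g j).1.2 ∧ (g (j + 1)).1.1 + m' ∈ FS (g j).1.2 := by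
    intro j
    rw [hgsucc j]
    exact (step_exists (g j).1.1 (g j).1.2 (g j).2).choose_spec.2
  set x : ℕ → ℕ := fun j => (g (j + 1)).1.1 with hx
  have hmono : StrictMono x := strictMono_nat_of_lt_succ fun j => (hspec (j + 1)).1
  -- monotonicity of the FS-sets
  have hFSmono : ∀ j j', j ≤ j' → FS (g j').1.2 ⊆ FS (g j).1.2 := by
    intro j j' h
    induction h with
    | refl => exact fun _ h => h
    | step h ih => exact fun m hm => ih ((hspec _).2.2 m hm).1
  -- all sums of x over finsets with elements ≥ j land in FS (g j).1.2
  have key : ∀ s : Finset ℕ, s.Nonempty → ∀ j, (∀ m ∈ s, j ≤ m) → ∑ n ∈ s, x n ∈ FS (g j).1.2 := by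
    intro s
    induction s using Finset.strongInduction with
    | _ s ih =>
      intro hs j hj
      set j0 := s.min' hs with hj0
      have hj0s : j0 ∈ s := s.min'_mem hs
      rw [← Finset.add_sum_erase _ _ hj0s]
      rcases (s.erase j0).eq_empty_or_nonempty with he | he
      · rw [he, Finset.sum_empty, Nat.add_zero]
        exact hFSmono j j0 (hj j0 hj0s) (hspec j0).2.1
      · have hrest : ∑ n ∈ s.erase j0, x n ∈ FS (g (j0 + 1)).1.2 := by
          refine ih _ (Finset.erase_ssubset hj0s) he (j0 + 1) fun m hm => ?_
          have := Finset.min'_lt_of_mem_erase_min' s hs hm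
          omega
        exact hFSmono j j0 (hj j0 hj0s) ((hspec j0).2.2 _ hrest).2
  refine ⟨Set.range x, i, Set.infinite_range_of_injective hmono.injective, ?_⟩
  intro s hs hsH
  -- rewrite the sum over s as a sum over indices
  have hinv : ∀ n ∈ s, x (Function.invFun x n) = n := by
    intro n hn
    exact Function.invFun_eq (hsH hn)
  have hsum : ∑ n ∈ s.image (Function.invFun x), x n = ∑ n ∈ s, n := by
    rw [Finset.sum_image (fun m hm m' hm' h => by
      rw [← hinv m hm, ← hinv m' hm', h])]
    exact Finset.sum_congr rfl hinv
  have hne : (s.image (Function.invFun x)).Nonempty := hs.image _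
  have := key _ hne 0 (fun m _ => Nat.zero_le m)
  rw [hsum] at this
  exact (hb this).2
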